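/- The map M : SL₂(ℤ) × 𝔥 → GL₂(ℂ) defined by M_γ(τ) = [[(cτ+d)^{-1}, 0], [2πi c, cτ+d]] for γ = (a b; c d) is a factor of automorphy: M_{γ₁γ₂}(τ) = M_{γ₁}(γ₂τ) M_{γ₂}(τ) for all γ₁, γ₂ ∈ SL₂(ℤ) and τ ∈ 𝔥. -/

import Mathlib

open UpperHalfPlane

noncomputable section

namespace Stmt8

lemma den_ne (g : Matrix.SpecialLinearGroup (Fin 2) ℤ) (τ : UpperHalfPlane) :
    ((g : Matrix (Fin 2) (Fin 2) ℤ) 1 0 : ℂ) * (τ : ℂ) +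
      ((g : Matrix (Fin 2) (Fin 2) ℤ) 1 1 : ℂ) ≠ 0 := by
  have h := UpperHalfPlane.linear_ne_zero
    (cd := ![((g : Matrix (Fin 2) (Fin 2) ℤ) 1 0 : ℝ), ((g : Matrix (Fin 2) (Fin 2) ℤ) 1 1 : ℝ)]) τ ?_
  · simpa using h
  · intro h
    have h0 := congrFun h 0
    have h1 := congrFun h 1
    simp at h0 h1
    have hd := g.2
    rw [Matrix.det_fin_two] at hd
    rw [h0, h1] at hd
    simp at hd

lemma coe_smul_int (g : Matrix.SpecialLinearGroup (Fin 2) ℤ) (τ : UpperHalfPlane) :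
    ((g • τ : UpperHalfPlane) : ℂ) =
      (((g : Matrix (Fin 2) (Fin 2) ℤ) 0 0 : ℂ) * τ + ((g : Matrix (Fin 2) (Fin 2) ℤ) 0 1 : ℂ)) /
      (((g : Matrix (Fin 2) (Fin 2) ℤ) 1 0 : ℂ) * τ + ((g : Matrix (Fin 2) (Fin 2) ℤ) 1 1 : ℂ)) := by
  rw [UpperHalfPlane.specialLinearGroup_apply]
  simp

end Stmt8

namespace Stmt8

/-- `M_γ(τ) = [[(cτ+d)⁻¹, 0], [2πi c, cτ+d]]` for `γ = (a b; c d) ∈ SL₂(ℤ)`, `τ ∈ 𝔥`. -/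
def M (γ : Matrix.SpecialLinearGroup (Fin 2) ℤ) (τ : UpperHalfPlane) :
    Matrix (Fin 2) (Fin 2) ℂ :=
  !![(((γ : Matrix (Fin 2) (Fin 2) ℤ) 1 0 : ℂ) * (τ : ℂ) +
        ((γ : Matrix (Fin 2) (Fin 2) ℤ) 1 1 : ℂ))⁻¹, 0;
     2 * (Real.pi : ℂ) * Complex.I * ((γ : Matrix (Fin 2) (Fin 2) ℤ) 1 0 : ℂ),
     ((γ : Matrix (Fin 2) (Fin 2) ℤ) 1 0 : ℂ) * (τ : ℂ) +
       ((γ : Matrix (Fin 2) (Fin 2) ℤ) 1 1 : ℂ)]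

/-- `M` is a factor of automorphy: `M_{γ₁γ₂}(τ) = M_{γ₁}(γ₂τ) M_{γ₂}(τ)`. -/
theorem factor_of_automorphy (γ₁ γ₂ : Matrix.SpecialLinearGroup (Fin 2) ℤ)
    (τ : UpperHalfPlane) :
    M (γ₁ * γ₂) τ = M γ₁ (γ₂ • τ) * M γ₂ τ := by
  set a₁ := ((γ₁ : Matrix (Fin 2) (Fin 2) ℤ) 0 0 : ℂ)
  set b₁ := ((γ₁ : Matrix (Fin 2) (Fin 2) ℤ) 0 1 : ℂ)
  set c₁ := ((γ₁ : Matrix (Fin 2) (Fin 2) ℤ) 1 0 : ℂ)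
  set d₁ := ((γ₁ : Matrix (Fin 2) (Fin 2) ℤ) 1 1 : ℂ)
  set a₂ := ((γ₂ : Matrix (Fin 2) (Fin 2) ℤ) 0 0 : ℂ)
  set b₂ := ((γ₂ : Matrix (Fin 2) (Fin 2) ℤ) 0 1 : ℂ)
  set c₂ := ((γ₂ : Matrix (Fin 2) (Fin 2) ℤ) 1 0 : ℂ)
  set d₂ := ((γ₂ : Matrix (Fin 2) (Fin 2) ℤ) 1 1 : ℂ)
  have hdet : a₂ * d₂ - b₂ * c₂ = 1 := by
    have hd := γ₂.2
    rw [Matrix.det_fin_two] at hd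
    have : ((((γ₂ : Matrix (Fin 2) (Fin 2) ℤ) 0 0 * (γ₂ : Matrix (Fin 2) (Fin 2) ℤ) 1 1 -
        (γ₂ : Matrix (Fin 2) (Fin 2) ℤ) 0 1 * (γ₂ : Matrix (Fin 2) (Fin 2) ℤ) 1 0 : ℤ)) : ℂ) = 1 := by
      rw [hd]; norm_num
    push_cast at this
    exact this
  have h2 : c₂ * (τ : ℂ) + d₂ ≠ 0 := den_ne γ₂ τ
  have h1' : c₁ * ((γ₂ • τ : UpperHalfPlane) : ℂ) + d₁ ≠ 0 := den_ne γ₁ (γ₂ • τ)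
  have hsm : ((γ₂ • τ : UpperHalfPlane) : ℂ) = (a₂ * τ + b₂) / (c₂ * τ + d₂) := coe_smul_int γ₂ τ
  have hc12 : (((γ₁ * γ₂ : Matrix.SpecialLinearGroup (Fin 2) ℤ) : Matrix (Fin 2) (Fin 2) ℤ) 1 0 : ℂ)
      = c₁ * a₂ + d₁ * c₂ := by
    simp [Matrix.SpecialLinearGroup.coe_mul, Matrix.mul_apply, Fin.sum_univ_two, a₂, c₁, c₂, d₁]
  have hd12 : (((γ₁ * γ₂ : Matrix.SpecialLinearGroup (Fin 2) ℤ) : Matrix (Fin 2) (Fin 2) ℤ) 1 1 : ℂ)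
      = c₁ * b₂ + d₁ * d₂ := by
    simp [Matrix.SpecialLinearGroup.coe_mul, Matrix.mul_apply, Fin.sum_univ_two, b₂, c₁, c₂, d₁, d₂]
  have h12 : (c₁ * a₂ + d₁ * c₂) * (τ : ℂ) + (c₁ * b₂ + d₁ * d₂) ≠ 0 := by
    have := den_ne (γ₁ * γ₂) τ
    rwa [hc12, hd12] at this
  ext i j
  fin_cases i <;> fin_cases j <;>
    simp only [M, Matrix.mul_apply, Fin.sum_univ_two, hc12, hd12, hsm,
      Matrix.cons_val', Matrix.cons_val_zero, Matrix.cons_val_one, Matrix.head_cons,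
      Matrix.empty_val', Matrix.cons_val_fin_one, Matrix.head_fin_const, Fin.mk_zero, Fin.mk_one,
      Matrix.of_apply]
  have h1'' : c₁ * ((a₂ : ℂ) * τ + b₂) + d₁ * (c₂ * τ + d₂) ≠ 0 := by
    intro h
    apply h1'
    rw [hsm, mul_div_assoc', div_add' _ _ _ h2, div_eq_zero_iff]
    exact Or.inl (by linear_combination h)
  · simp only [show ((γ₁ : Matrix (Fin 2) (Fin 2) ℤ) 1 0 : ℂ) = c₁ from rfl,
        show ((γ₁ : Matrix (Fin 2) (Fin 2) ℤ) 1 1 : ℂ) = d₁ from rfl,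
        show ((γ₂ : Matrix (Fin 2) (Fin 2) ℤ) 1 0 : ℂ) = c₂ from rfl,
        show ((γ₂ : Matrix (Fin 2) (Fin 2) ℤ) 1 1 : ℂ) = d₂ from rfl]
    rw [show c₁ * ((a₂ * τ + b₂) / (c₂ * τ + d₂)) + d₁
        = (c₁ * (a₂ * τ + b₂) + d₁ * (c₂ * τ + d₂)) / (c₂ * τ + d₂) by rw [mul_div_assoc', div_add' _ _ _ h2]]
    field_simp
    ring
  · ring
  · simp only [show ((γ₁ : Matrix (Fin 2) (Fin 2) ℤ) 1 0 : ℂ) = c₁ from rfl,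
        show ((γ₁ : Matrix (Fin 2) (Fin 2) ℤ) 1 1 : ℂ) = d₁ from rfl,
        show ((γ₂ : Matrix (Fin 2) (Fin 2) ℤ) 1 0 : ℂ) = c₂ from rfl,
        show ((γ₂ : Matrix (Fin 2) (Fin 2) ℤ) 1 1 : ℂ) = d₂ from rfl]
    rw [show c₁ * ((a₂ * τ + b₂) / (c₂ * τ + d₂)) + d₁
        = (c₁ * (a₂ * τ + b₂) + d₁ * (c₂ * τ + d₂)) / (c₂ * τ + d₂) by rw [mul_div_assoc', div_add' _ _ _ h2]]
    field_simp
    linear_combination c₁ * hdet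
  · simp only [show ((γ₁ : Matrix (Fin 2) (Fin 2) ℤ) 1 0 : ℂ) = c₁ from rfl,
        show ((γ₁ : Matrix (Fin 2) (Fin 2) ℤ) 1 1 : ℂ) = d₁ from rfl,
        show ((γ₂ : Matrix (Fin 2) (Fin 2) ℤ) 1 0 : ℂ) = c₂ from rfl,
        show ((γ₂ : Matrix (Fin 2) (Fin 2) ℤ) 1 1 : ℂ) = d₂ from rfl]
    rw [show c₁ * ((a₂ * τ + b₂) / (c₂ * τ + d₂)) + d₁
        = (c₁ * (a₂ * τ + b₂) + d₁ * (c₂ * τ + d₂)) / (c₂ * τ + d₂) by rw [mul_div_assoc', div_add' _ _ _ h2]]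
    field_simp
    ring
end Stmt8
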